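/- If |T| < 2√(n+1), then for every nonempty proper subset S of T, the cell V_T(S) is either empty or unbounded. -/

import Mathlib

open Finset Metric
open scoped Classical

/-- The multipoint (higher-order) Voronoi cell of `S` within the set of sites `T`. -/
def vcell {n : ℕ} (T S : Finset (EuclideanSpace ℝ (Fin n))) :
    Set (EuclideanSpace ℝ (Fin n)) :=
  {x | ∀ s ∈ S, ∀ t ∈ T \ S, dist x s ≤ dist x t}

lemma cone_dir {n : ℕ} (hn : 0 < n) (A : Finset (EuclideanSpace ℝ (Fin n)))
    (hA : A.card ≤ n) :
    ∃ v : EuclideanSpace ℝ (Fin n), v ≠ 0 ∧ ∀ a ∈ A, inner ℝ a v ≤ (0:ℝ) := by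
  set f : EuclideanSpace ℝ (Fin n) →ₗ[ℝ] (A → ℝ) :=
    LinearMap.pi (fun a : A => (innerSL ℝ (a : EuclideanSpace ℝ (Fin n))).toLinearMap)
  by_cases hf : Function.Injective f
  · have hd : Module.finrank ℝ (EuclideanSpace ℝ (Fin n)) ≤ Module.finrank ℝ (A → ℝ) :=
      LinearMap.finrank_le_finrank_of_injective hf
    have h1 : Module.finrank ℝ (EuclideanSpace ℝ (Fin n)) = n := by simp
    have h2 : Module.finrank ℝ (A → ℝ) = A.card := by simp
    have heq : Module.finrank ℝ (EuclideanSpace ℝ (Fin n)) = Module.finrank ℝ (A → ℝ) := by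
      omega
    have hsurj := (LinearMap.injective_iff_surjective_of_finrank_eq_finrank heq).mp hf
    obtain ⟨v, hv⟩ := hsurj (fun _ => -1)
    have hAne : A.Nonempty := by
      rw [← Finset.card_pos]; omega
    obtain ⟨a0, ha0⟩ := hAne
    refine ⟨v, ?_, ?_⟩
    · intro h0
      have := congrFun hv ⟨a0, ha0⟩
      rw [h0] at this
      simp [f] at this
    · intro a ha
      have := congrFun hv ⟨a, ha⟩
      simp only [f, LinearMap.pi_apply, ContinuousLinearMap.coe_coe, innerSL_apply_apply] at this
      rw [this]; norm_num
  · rw [← LinearMap.ker_eq_bot, Submodule.eq_bot_iff] at hf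
    push_neg at hf
    obtain ⟨v, hvker, hv0⟩ := hf
    refine ⟨v, hv0, fun a ha => ?_⟩
    have := congrFun hvker ⟨a, ha⟩
    simp only [f, LinearMap.mem_ker] at hvker
    have := congrFun hvker ⟨a, ha⟩
    simp only [LinearMap.pi_apply, ContinuousLinearMap.coe_coe, innerSL_apply_apply,
      Pi.zero_apply] at this
    rw [this]

lemma half_stable {n : ℕ} (x s t v : EuclideanSpace ℝ (Fin n)) (c : ℝ) (hc : 0 ≤ c)
    (hst : dist x s ≤ dist x t) (hv : inner ℝ (t - s) v ≤ (0:ℝ)) :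
    dist (x + c • v) s ≤ dist (x + c • v) t := by
  simp only [dist_eq_norm] at hst ⊢
  have h1 : x + c • v - s = (x - s) + c • v := by abel
  have h2 : x + c • v - t = (x - t) + c • v := by abel
  rw [h1, h2, ← Real.sqrt_sq (norm_nonneg ((x - s) + c • v)),
    ← Real.sqrt_sq (norm_nonneg ((x - t) + c • v))]
  apply Real.sqrt_le_sqrt
  rw [← real_inner_self_eq_norm_sq, ← real_inner_self_eq_norm_sq]
  have e1 : (inner ℝ ((x-s) + c•v) ((x-s) + c•v) : ℝ) =
      inner ℝ (x-s) (x-s) + 2 * (c * inner ℝ (x-s) v) + c^2 * inner ℝ v v := by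
    rw [real_inner_add_add_self, real_inner_smul_right, real_inner_smul_left,
      real_inner_smul_right]
    ring
  have e2 : (inner ℝ ((x-t) + c•v) ((x-t) + c•v) : ℝ) =
      inner ℝ (x-t) (x-t) + 2 * (c * inner ℝ (x-t) v) + c^2 * inner ℝ v v := by
    rw [real_inner_add_add_self, real_inner_smul_right, real_inner_smul_left,
      real_inner_smul_right]
    ring
  rw [e1, e2]
  have hd : (inner ℝ (x-s) v : ℝ) - inner ℝ (x-t) v = inner ℝ (t - s) v := by
    rw [← inner_sub_left]; congr 1; abel
  have hss : inner ℝ (x-s) (x-s) ≤ (inner ℝ (x-t) (x-t) : ℝ) := by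
    rw [real_inner_self_eq_norm_sq, real_inner_self_eq_norm_sq]
    exact pow_le_pow_left₀ (norm_nonneg _) hst 2
  nlinarith [mul_nonneg hc (neg_nonneg.mpr hv), hd, hss]

theorem stmt_8 {n : ℕ} (T : Finset (EuclideanSpace ℝ (Fin n)))
    (hcard : (T.card : ℝ) < 2 * Real.sqrt (n + 1)) :
    ∀ S : Finset (EuclideanSpace ℝ (Fin n)), S.Nonempty → S ⊂ T →
      vcell T S = ∅ ∨ ¬ Bornology.IsBounded (vcell T S) := by
  intro S hSne hST
  rcases Set.eq_empty_or_nonempty (vcell T S) with he | ⟨x, hx⟩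
  · exact Or.inl he
  right
  -- card facts
  have hTS : (T \ S).Nonempty := by
    obtain ⟨t, htT, htS⟩ := Finset.exists_of_ssubset hST
    exact ⟨t, Finset.mem_sdiff.mpr ⟨htT, htS⟩⟩
  have hsum : S.card + (T \ S).card = T.card := by
    rw [Finset.card_sdiff_of_subset hST.subset]
    exact Nat.add_sub_cancel' (Finset.card_le_card hST.subset)
  have hprod : S.card * (T \ S).card ≤ n := by
    have ha : (1:ℝ) ≤ S.card := by exact_mod_cast Finset.card_pos.mpr hSne
    have hb : (1:ℝ) ≤ (T \ S).card := by exact_mod_cast Finset.card_pos.mpr hTS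
    have hsum' : (S.card : ℝ) + (T \ S).card = T.card := by exact_mod_cast hsum
    have hs : Real.sqrt (n + 1) ^ 2 = n + 1 := Real.sq_sqrt (by positivity)
    have h0 : (0:ℝ) ≤ Real.sqrt (n + 1) := Real.sqrt_nonneg _
    have key : (S.card : ℝ) * (T \ S).card < n + 1 := by
      nlinarith [sq_nonneg ((S.card : ℝ) - (T \ S).card)]
    have : (S.card * (T \ S).card : ℝ) < (n : ℝ) + 1 := by exact_mod_cast key
    have : S.card * (T \ S).card < n + 1 := by exact_mod_cast this
    omega
  have hn : 0 < n := by
    have := Finset.card_pos.mpr hSne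
    have := Finset.card_pos.mpr hTS
    nlinarith
  set A : Finset (EuclideanSpace ℝ (Fin n)) :=
    (S ×ˢ (T \ S)).image (fun p => p.2 - p.1) with hA
  have hAcard : A.card ≤ n := by
    calc A.card ≤ (S ×ˢ (T \ S)).card := Finset.card_image_le
    _ = S.card * (T \ S).card := Finset.card_product _ _
    _ ≤ n := hprod
  obtain ⟨v, hv0, hv⟩ := cone_dir hn A hAcard
  intro hB
  obtain ⟨r, hr⟩ := hB.subset_closedBall x
  set c : ℝ := (|r| + 1) / ‖v‖ with hc
  have hvn : (0:ℝ) < ‖v‖ := norm_pos_iff.mpr hv0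
  have hcpos : 0 < c := by positivity
  have hmem : x + c • v ∈ vcell T S := by
    intro s hs t ht
    apply half_stable x s t v c hcpos.le (hx s hs t ht)
    apply hv
    exact Finset.mem_image.mpr ⟨(s, t), Finset.mem_product.mpr ⟨hs, ht⟩, rfl⟩
  have hdist : dist (x + c • v) x = |r| + 1 := by
    rw [dist_eq_norm]
    have : x + c • v - x = c • v := by abel
    rw [this, norm_smul, Real.norm_eq_abs, abs_of_pos hcpos, hc,
      div_mul_cancel₀ _ hvn.ne']
  have := hr hmem
  rw [Metric.mem_closedBall, hdist] at this
  have : |r| + 1 ≤ |r| := this.trans (le_abs_self r)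
  linarith
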